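/- Let n ≥ 3 be an integer. Let L be an integer, P an integer with P ≥ n−1, and R_1,…,R_{n−3} integers with R_j ≤ −1 for all j and P + Σ_{j=1}^{n−3} R_j ≥ 2. Define T_0(i,t) = min(0, L + i·P − t) and, for p = 1,…,n−3, T_p(i,t) = min(0, L + i·P − t + Σ_{j=p}^{n−3} R_j), and set T_{n−2} := T_0. Then for all (i,t) ∈ ℤ²: T_0(i,t−1) + T_1(i+2,t+1) = min( T_1(i+1,t+1) + T_0(i+1,t−1), 1 + T_0(i,t) + T_1(i+2,t) ); and for each p = 1,…,n−3: T_p(i+1,t−1) + T_{p+1}(i+2,t) = min( T_{p+1}(i+1,t) + T_p(i+2,t−1), 1 + T_p(i+1,t) + T_{p+1}(i+2,t−1) ). (This is the one-soliton solution of the tropical tau-function system for Φ(n,k).) -/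
import Mathlib

/-- The one-soliton solution of the tropical tau-function system for `Φ(n,k)`
(Proposition 6.6 (i) of the paper). -/
theorem stmt_13 (n : ℕ) (hn : 3 ≤ n)
    (L P : ℤ) (hP : (n : ℤ) - 1 ≤ P)
    (R : ℕ → ℤ) (hR : ∀ j : ℕ, 1 ≤ j → j ≤ n - 3 → R j ≤ -1)
    (hPR : 2 ≤ P + ∑ j ∈ Finset.Icc 1 (n - 3), R j)
    (T : ℕ → ℤ → ℤ → ℤ)
    (hT0 : ∀ i t : ℤ, T 0 i t = min 0 (L + i * P - t))
    (hTp : ∀ p : ℕ, 1 ≤ p → p ≤ n - 3 → ∀ i t : ℤ,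
      T p i t = min 0 (L + i * P - t + ∑ j ∈ Finset.Icc p (n - 3), R j))
    (hTn : ∀ i t : ℤ, T (n - 2) i t = T 0 i t) :
    (∀ i t : ℤ,
      T 0 i (t - 1) + T 1 (i + 2) (t + 1) =
        min (T 1 (i + 1) (t + 1) + T 0 (i + 1) (t - 1))
            (1 + T 0 i t + T 1 (i + 2) t)) ∧
    (∀ p : ℕ, 1 ≤ p → p ≤ n - 3 → ∀ i t : ℤ,
      T p (i + 1) (t - 1) + T (p + 1) (i + 2) t =
        min (T (p + 1) (i + 1) t + T p (i + 2) (t - 1))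
            (1 + T p (i + 1) t + T (p + 1) (i + 2) (t - 1))) := by
  have hn3 : (3:ℤ) ≤ (n:ℤ) := by exact_mod_cast hn
  have hP2 : (2:ℤ) ≤ P := by omega
  set s : ℤ := ∑ j ∈ Finset.Icc 1 (n-3), R j with hs
  have hT1 : ∀ i t : ℤ, T 1 i t = min 0 (L + i*P - t + s) := by
    intro i t
    rcases Nat.lt_or_ge n 4 with h4 | h4
    · have hs0 : s = 0 := by
        rw [hs, show n - 3 = 0 from by omega]
        simp
      rw [show (1:ℕ) = n - 2 from by omega, hTn, hT0, hs0, add_zero]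
    · exact hTp 1 le_rfl (by omega) i t
  constructor
  · intro i t
    rw [hT0, hT0, hT0, hT1, hT1, hT1]
    have e1 : (i+1)*P = i*P + P := by ring
    have e2 : (i+2)*P = i*P + 2*P := by ring
    rw [e1, e2]
    generalize i * P = x
    omega
  · intro p hp1 hp2 i t
    have hn4 : 4 ≤ n := by omega
    set Sp : ℤ := ∑ j ∈ Finset.Icc p (n-3), R j with hSp
    set Sq : ℤ := ∑ j ∈ Finset.Icc (p+1) (n-3), R j with hSq
    have hRp : R p ≤ -1 := hR p hp1 hp2
    have hsplit : Sp = R p + Sq := by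
      rw [hSp, hSq, Finset.Icc_add_one_left_eq_Ioc,
        ← Finset.Ioc_insert_left (by omega : p ≤ n - 3),
        Finset.sum_insert (by simp)]
    have hsle : s ≤ Sp := by
      obtain ⟨q, rfl⟩ : ∃ q, p = q + 1 := ⟨p-1, by omega⟩
      have h1 : Finset.Icc 1 (n-3) = Finset.Ioc 0 (n-3) := Finset.Icc_add_one_left_eq_Ioc 0 (n-3)
      have h2 : Finset.Icc (q+1) (n-3) = Finset.Ioc q (n-3) := Finset.Icc_add_one_left_eq_Ioc q (n-3)
      have hcons := Finset.sum_Ioc_consecutive R (Nat.zero_le q) (by omega : q ≤ n - 3)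
      have hnp : (∑ j ∈ Finset.Ioc 0 q, R j) ≤ 0 := by
        apply Finset.sum_nonpos
        intro j hj
        simp only [Finset.mem_Ioc] at hj
        have := hR j hj.1 (by omega)
        omega
      rw [hs, hSp, h1, h2]
      omega
    have hTq : ∀ i t : ℤ, T (p+1) i t = min 0 (L + i*P - t + Sq) := by
      intro i t
      rcases Nat.lt_or_ge (n-3) (p+1) with h | h
      · have hq0 : Sq = 0 := by
          rw [hSq, Finset.Icc_eq_empty (by omega)]
          simp
        rw [show p + 1 = n - 2 from by omega, hTn, hT0, hq0, add_zero]
      · exact hTp (p+1) (by omega) h i t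
    rw [hTp p hp1 hp2, hTp p hp1 hp2, hTp p hp1 hp2, hTq, hTq, hTq]
    have e1 : (i+1)*P = i*P + P := by ring
    have e2 : (i+2)*P = i*P + 2*P := by ring
    rw [e1, e2]
    generalize i * P = x
    omega
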